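/- arXiv:1311.6802 — 5 statements merged into one kernel-verified Lean document; each statement's English description precedes it below -/
import Mathlib

section
/- Let the marginal likelihood of a rating vector r given type t be g(t) = ∫_{ℝ^d} exp(−‖r − V u − z_t‖²/(2σ₀²)) · exp(−‖u‖²/(2σ_u²)) du. Then g(+1) ≥ g(−1) if and only if δᵀ M r̄ ≥ 0. Consequently, under a uniform prior on the two types, the maximum a-posteriori estimate of the type given the ratings r is t̂(r) = sgn(δᵀ M r̄) (Theorem 1, the Factor-Based Classifier). -/
open Matrix MeasureTheory Real

/-- **Theorem 1 (Factor-Based Classifier).**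
With marginal likelihood `g t = ∫ exp(−‖r − V u − z_t‖²/(2σ₀²)) exp(−‖u‖²/(2σ_u²)) du`,
we have `g(+1) ≥ g(−1)` iff `δᵀ M r̄ ≥ 0`; consequently, under a uniform prior on the
two types the MAP estimate of the type is `t̂(r) = sgn(δᵀ M r̄)`. -/
theorem fbc_map_classifier (d k : ℕ) (hd : 0 < d) (hk : 0 < k)
    (V : Matrix (Fin k) (Fin d) ℝ) (σ₀ σu : ℝ) (hσ₀ : 0 < σ₀) (hσu : 0 < σu)
    (lam : ℝ) (hlam : lam = σ₀ ^ 2 / σu ^ 2)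
    (Sig : Matrix (Fin d) (Fin d) ℝ)
    (hSig : Sig = lam • (1 : Matrix (Fin d) (Fin d) ℝ) + Vᵀ * V)
    (M : Matrix (Fin k) (Fin k) ℝ)
    (hM : M = (1 : Matrix (Fin k) (Fin k) ℝ) - V * Sig⁻¹ * Vᵀ)
    (zp zm r : Fin k → ℝ)
    (δ : Fin k → ℝ) (hδ : δ = (1 / 2 : ℝ) • (zp - zm))
    (rbar : Fin k → ℝ) (hrbar : rbar = r - (1 / 2 : ℝ) • (zp + zm))
    (z : ℤ → Fin k → ℝ) (hz₁ : z 1 = zp) (hz₂ : z (-1) = zm)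
    (g : ℤ → ℝ)
    (hg : ∀ t : ℤ, g t =
      ∫ u : Fin d → ℝ,
        Real.exp (-((r - V.mulVec u - z t) ⬝ᵥ (r - V.mulVec u - z t)) / (2 * σ₀ ^ 2)) *
          Real.exp (-(u ⬝ᵥ u) / (2 * σu ^ 2))) :
    (g 1 ≥ g (-1) ↔ δ ⬝ᵥ M.mulVec rbar ≥ 0) ∧
    (∀ t : ℤ, t = 1 ∨ t = -1 →
      g (if δ ⬝ᵥ M.mulVec rbar ≥ 0 then 1 else -1) ≥ g t) := by
  have hc : (0:ℝ) < 2 * σ₀ ^ 2 := by positivity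
  have hlam0 : 0 < lam := by rw [hlam]; positivity
  -- Σ is positive definite
  have hSigPD : Sig.PosDef := by
    refine Matrix.posDef_iff_dotProduct_mulVec.mpr ⟨?_, ?_⟩
    · rw [hSig]
      simp only [Matrix.IsHermitian, conjTranspose_eq_transpose_of_trivial, Matrix.transpose_add,
        Matrix.transpose_smul, Matrix.transpose_one, Matrix.transpose_mul,
        Matrix.transpose_transpose]
    · intro x hx
      have hst : star x = x := by simp
      rw [hst, hSig, Matrix.add_mulVec, dotProduct_add, Matrix.smul_mulVec,
        Matrix.one_mulVec, dotProduct_smul, ← Matrix.mulVec_mulVec,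
        Matrix.dotProduct_mulVec, Matrix.vecMul_transpose]
      have h1 : 0 < x ⬝ᵥ x := lt_of_le_of_ne (Finset.sum_nonneg fun i _ => mul_self_nonneg _)
        (Ne.symm (fun h => hx (dotProduct_self_eq_zero.mp h)))
      have h2 : 0 ≤ (V *ᵥ x) ⬝ᵥ (V *ᵥ x) := Finset.sum_nonneg fun i _ => mul_self_nonneg _
      have := mul_pos hlam0 h1
      positivity
  have hSigT : Sigᵀ = Sig := by
    rw [hSig]
    simp only [Matrix.transpose_add, Matrix.transpose_smul, Matrix.transpose_one,
      Matrix.transpose_mul, Matrix.transpose_transpose]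
  have hdet : IsUnit Sig.det := (Matrix.isUnit_iff_isUnit_det Sig).mp hSigPD.isUnit
  have hInv : Sig * Sig⁻¹ = 1 := Matrix.mul_nonsing_inv _ hdet
  -- the completion-of-square identity
  have key : ∀ (a : Fin k → ℝ) (u : Fin d → ℝ),
      (a - V *ᵥ u) ⬝ᵥ (a - V *ᵥ u) + lam * (u ⬝ᵥ u)
        = (u - Sig⁻¹ *ᵥ (Vᵀ *ᵥ a)) ⬝ᵥ (Sig *ᵥ (u - Sig⁻¹ *ᵥ (Vᵀ *ᵥ a))) + a ⬝ᵥ (M *ᵥ a) := by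
    intro a u
    set b : Fin d → ℝ := Vᵀ *ᵥ a with hb
    set m : Fin d → ℝ := Sig⁻¹ *ᵥ b with hm
    have F1 : Sig *ᵥ m = b := by
      rw [hm, Matrix.mulVec_mulVec, hInv, Matrix.one_mulVec]
    have hsymm : ∀ x y : Fin d → ℝ, x ⬝ᵥ (Sig *ᵥ y) = (Sig *ᵥ x) ⬝ᵥ y := by
      intro x y
      rw [Matrix.dotProduct_mulVec, ← Matrix.vecMul_transpose, hSigT,
        ← Matrix.dotProduct_mulVec]
    have hquad : ∀ x : Fin d → ℝ, x ⬝ᵥ (Sig *ᵥ x) = lam * (x ⬝ᵥ x) + (V *ᵥ x) ⬝ᵥ (V *ᵥ x) := by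
      intro x
      rw [hSig, Matrix.add_mulVec, dotProduct_add, Matrix.smul_mulVec,
        Matrix.one_mulVec, dotProduct_smul, ← Matrix.mulVec_mulVec,
        Matrix.dotProduct_mulVec, Matrix.vecMul_transpose]
      rfl
    have F5 : ∀ x : Fin d → ℝ, x ⬝ᵥ b = (V *ᵥ x) ⬝ᵥ a := by
      intro x
      rw [hb, Matrix.dotProduct_mulVec, Matrix.vecMul_transpose]
    have F6 : a ⬝ᵥ (M *ᵥ a) = a ⬝ᵥ a - b ⬝ᵥ m := by
      rw [hM, Matrix.sub_mulVec, dotProduct_sub, Matrix.one_mulVec]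
      congr 1
      rw [← Matrix.mulVec_mulVec, ← Matrix.mulVec_mulVec, ← hb, ← hm,
        Matrix.dotProduct_mulVec, ← Matrix.mulVec_transpose, ← hb]
    have expand : (u - m) ⬝ᵥ (Sig *ᵥ (u - m))
        = u ⬝ᵥ (Sig *ᵥ u) - u ⬝ᵥ (Sig *ᵥ m) - m ⬝ᵥ (Sig *ᵥ u) + m ⬝ᵥ (Sig *ᵥ m) := by
      simp only [Matrix.mulVec_sub, dotProduct_sub, sub_dotProduct]
      ring
    have hum : u ⬝ᵥ (Sig *ᵥ m) = (V *ᵥ u) ⬝ᵥ a := by rw [F1, F5]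
    have hmu : m ⬝ᵥ (Sig *ᵥ u) = (V *ᵥ u) ⬝ᵥ a := by
      rw [hsymm, F1, dotProduct_comm, F5]
    have hmm : m ⬝ᵥ (Sig *ᵥ m) = b ⬝ᵥ m := by rw [F1, dotProduct_comm]
    have lhsx : (a - V *ᵥ u) ⬝ᵥ (a - V *ᵥ u)
        = a ⬝ᵥ a - 2 * ((V *ᵥ u) ⬝ᵥ a) + (V *ᵥ u) ⬝ᵥ (V *ᵥ u) := by
      rw [dotProduct_sub, sub_dotProduct, sub_dotProduct,
        dotProduct_comm a (V *ᵥ u)]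
      ring
    rw [expand, hum, hmu, hmm, hquad, F6, lhsx]
    ring
  -- the Gaussian normalization constant
  set C : ℝ := ∫ u : Fin d → ℝ, Real.exp (-(u ⬝ᵥ Sig *ᵥ u) / (2 * σ₀ ^ 2)) with hCdef
  have hquad : ∀ x : Fin d → ℝ, x ⬝ᵥ (Sig *ᵥ x) = lam * (x ⬝ᵥ x) + (V *ᵥ x) ⬝ᵥ (V *ᵥ x) := by
    intro x
    rw [hSig, Matrix.add_mulVec, dotProduct_add, Matrix.smul_mulVec,
      Matrix.one_mulVec, dotProduct_smul, ← Matrix.mulVec_mulVec,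
      Matrix.dotProduct_mulVec, Matrix.vecMul_transpose]
    rfl
  have hCpos : 0 < C := by
    have hcont : Continuous fun u : Fin d → ℝ => u ⬝ᵥ (Sig *ᵥ u) := by
      simp only [dotProduct, Matrix.mulVec]
      exact continuous_finset_sum _ fun i _ => (continuous_apply i).mul
        (continuous_finset_sum _ fun j _ => continuous_const.mul (continuous_apply j))
    have h_int_g : Integrable
        (fun u : Fin d → ℝ => ∏ i, Real.exp (-(lam / (2 * σ₀ ^ 2)) * (u i) ^ 2)) :=
      Integrable.fintype_prod fun _ => integrable_exp_neg_mul_sq (by positivity)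
    have hbound : ∀ u : Fin d → ℝ,
        Real.exp (-(u ⬝ᵥ Sig *ᵥ u) / (2 * σ₀ ^ 2))
          ≤ ∏ i, Real.exp (-(lam / (2 * σ₀ ^ 2)) * (u i) ^ 2) := by
      intro u
      rw [← Real.exp_sum]
      apply Real.exp_le_exp.2
      have h1 : ∑ i, -(lam / (2 * σ₀ ^ 2)) * (u i) ^ 2
          = -(lam * (u ⬝ᵥ u)) / (2 * σ₀ ^ 2) := by
        rw [dotProduct, Finset.mul_sum, neg_div, Finset.sum_div,
          ← Finset.sum_neg_distrib]
        exact Finset.sum_congr rfl fun i _ => by ring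
      rw [h1, hquad]
      have h2 : 0 ≤ (V *ᵥ u) ⬝ᵥ (V *ᵥ u) := Finset.sum_nonneg fun i _ => mul_self_nonneg _
      gcongr ?_ / (2 * σ₀ ^ 2)
      linarith
    have h_int_f : Integrable
        (fun u : Fin d → ℝ => Real.exp (-(u ⬝ᵥ Sig *ᵥ u) / (2 * σ₀ ^ 2))) := by
      refine h_int_g.mono' ?_ (Filter.Eventually.of_forall fun u => ?_)
      · exact (((hcont.neg).div_const _).rexp).aestronglyMeasurable
      · rw [Real.norm_eq_abs, abs_of_pos (Real.exp_pos _)]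
        exact hbound u
    rw [hCdef, integral_pos_iff_support_of_nonneg (fun u => (Real.exp_pos _).le) h_int_f]
    have : Function.support
        (fun u : Fin d → ℝ => Real.exp (-(u ⬝ᵥ Sig *ᵥ u) / (2 * σ₀ ^ 2))) = Set.univ :=
      Set.eq_univ_of_forall fun u => (Real.exp_pos _).ne'
    rw [this]
    exact isOpen_univ.measure_pos volume Set.univ_nonempty
  -- evaluation of the marginal likelihood
  have hg' : ∀ a : Fin k → ℝ,
      (∫ u : Fin d → ℝ,
        Real.exp (-((a - V *ᵥ u) ⬝ᵥ (a - V *ᵥ u)) / (2 * σ₀ ^ 2)) *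
          Real.exp (-(u ⬝ᵥ u) / (2 * σu ^ 2)))
      = Real.exp (-(a ⬝ᵥ (M *ᵥ a)) / (2 * σ₀ ^ 2)) * C := by
    intro a
    set m : Fin d → ℝ := Sig⁻¹ *ᵥ (Vᵀ *ᵥ a) with hmdef
    have hpt : ∀ u : Fin d → ℝ,
        Real.exp (-((a - V *ᵥ u) ⬝ᵥ (a - V *ᵥ u)) / (2 * σ₀ ^ 2)) *
          Real.exp (-(u ⬝ᵥ u) / (2 * σu ^ 2))
        = Real.exp (-((u - m) ⬝ᵥ (Sig *ᵥ (u - m))) / (2 * σ₀ ^ 2)) *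
            Real.exp (-(a ⬝ᵥ (M *ᵥ a)) / (2 * σ₀ ^ 2)) := by
      intro u
      rw [← Real.exp_add, ← Real.exp_add]
      congr 1
      have h2 : -(u ⬝ᵥ u) / (2 * σu ^ 2) = -(lam * (u ⬝ᵥ u)) / (2 * σ₀ ^ 2) := by
        rw [hlam]
        field_simp
      rw [h2, ← add_div, ← add_div, ← neg_add, ← neg_add, key a u]
    simp only [hpt]
    rw [MeasureTheory.integral_mul_const]
    have htrans := MeasureTheory.integral_sub_right_eq_self
      (μ := (volume : Measure (Fin d → ℝ)))
      (fun v : Fin d → ℝ => Real.exp (-(v ⬝ᵥ (Sig *ᵥ v)) / (2 * σ₀ ^ 2))) m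
    rw [htrans, ← hCdef, mul_comm]
  -- value of g at each type
  have gval : ∀ t : ℤ,
      g t = Real.exp (-((r - z t) ⬝ᵥ (M *ᵥ (r - z t))) / (2 * σ₀ ^ 2)) * C := by
    intro t
    rw [hg t]
    have e1 : ∀ u : Fin d → ℝ, r - V *ᵥ u - z t = (r - z t) - V *ᵥ u := fun u =>
      sub_right_comm r (V *ᵥ u) (z t)
    simp only [e1]
    exact hg' (r - z t)
  have ha1 : r - z 1 = rbar - δ := by
    rw [hz₁, hδ, hrbar]
    funext i
    simp only [Pi.sub_apply, Pi.add_apply, Pi.smul_apply, smul_eq_mul]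
    ring
  have ham1 : r - z (-1) = rbar + δ := by
    rw [hz₂, hδ, hrbar]
    funext i
    simp only [Pi.sub_apply, Pi.add_apply, Pi.smul_apply, smul_eq_mul]
    ring
  -- symmetry of M
  have hMT : Mᵀ = M := by
    rw [hM]
    simp only [Matrix.transpose_sub, Matrix.transpose_one, Matrix.transpose_mul,
      Matrix.transpose_transpose, Matrix.transpose_nonsing_inv, hSigT, Matrix.mul_assoc]
  have hsymM : rbar ⬝ᵥ (M *ᵥ δ) = δ ⬝ᵥ (M *ᵥ rbar) := by
    rw [Matrix.dotProduct_mulVec, ← Matrix.mulVec_transpose, hMT, dotProduct_comm,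
      Matrix.dotProduct_mulVec]
  have hdiff : (rbar + δ) ⬝ᵥ (M *ᵥ (rbar + δ)) - (rbar - δ) ⬝ᵥ (M *ᵥ (rbar - δ))
      = 4 * (δ ⬝ᵥ (M *ᵥ rbar)) := by
    simp only [Matrix.mulVec_add, Matrix.mulVec_sub, dotProduct_add,
      dotProduct_sub, add_dotProduct, sub_dotProduct]
    linarith [hsymM]
  -- the main equivalence
  have main : g 1 ≥ g (-1) ↔ δ ⬝ᵥ M.mulVec rbar ≥ 0 := by
    rw [gval 1, gval (-1), ha1, ham1, ge_iff_le, mul_le_mul_iff_left₀ hCpos, Real.exp_le_exp,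
      div_le_div_iff_of_pos_right hc, neg_le_neg_iff]
    constructor
    · intro h
      rw [ge_iff_le]
      linarith [hdiff]
    · intro h
      linarith [hdiff]
  refine ⟨main, ?_⟩
  intro t ht
  by_cases hcond : δ ⬝ᵥ M.mulVec rbar ≥ 0
  · rw [if_pos hcond]
    rcases ht with rfl | rfl
    · exact le_refl _
    · exact main.mpr hcond
  · rw [if_neg hcond]
    rcases ht with rfl | rfl
    · exact le_of_lt (lt_of_not_ge fun h => hcond (main.mp h))
    · exact le_refl _
end

section
/- For every vector w ∈ ℝ^k, ∫_{ℝ^d} exp(−‖w − V u‖²/(2σ₀²) − ‖u‖²/(2σ_u²)) du = (σ₀ √(2π))^d · (det Σ)^{−1/2} · exp( wᵀ (V Σ⁻¹ Vᵀ − I_k) w / (2σ₀²) ). -/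
open Matrix MeasureTheory Real

/-- Gaussian integral identity: for every `w ∈ ℝ^k`,
`∫_{ℝ^d} exp(−‖w − V u‖²/(2σ₀²) − ‖u‖²/(2σ_u²)) du
  = (σ₀√(2π))^d (det Σ)^{−1/2} exp(wᵀ(VΣ⁻¹Vᵀ − I)w/(2σ₀²))`. -/
theorem gaussian_marginal_integral (d k : ℕ) (hd : 0 < d) (hk : 0 < k)
    (V : Matrix (Fin k) (Fin d) ℝ) (σ₀ σu : ℝ) (hσ₀ : 0 < σ₀) (hσu : 0 < σu)
    (lam : ℝ) (hlam : lam = σ₀ ^ 2 / σu ^ 2)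
    (Sig : Matrix (Fin d) (Fin d) ℝ)
    (hSig : Sig = lam • (1 : Matrix (Fin d) (Fin d) ℝ) + Vᵀ * V)
    (w : Fin k → ℝ) :
    (∫ u : Fin d → ℝ,
        Real.exp (-((w - V.mulVec u) ⬝ᵥ (w - V.mulVec u)) / (2 * σ₀ ^ 2)
          - (u ⬝ᵥ u) / (2 * σu ^ 2)))
      = (σ₀ * Real.sqrt (2 * π)) ^ d * (Real.sqrt Sig.det)⁻¹ *
          Real.exp ((w ⬝ᵥ (V * Sig⁻¹ * Vᵀ - 1).mulVec w) / (2 * σ₀ ^ 2)) := by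
  have hlam0 : 0 < lam := by rw [hlam]; positivity
  -- Sig is positive definite
  have hPD : Sig.PosDef := by
    rw [hSig]
    refine Matrix.PosDef.of_dotProduct_mulVec_pos ?_ fun x hx => ?_
    · have h9 : ((lam • (1 : Matrix (Fin d) (Fin d) ℝ) + Vᵀ * V))ᴴ
          = ((lam • (1 : Matrix (Fin d) (Fin d) ℝ) + Vᵀ * V))ᵀ := by
        ext i j; simp [conjTranspose_apply, transpose_apply]
      rw [Matrix.IsHermitian, h9]
      simp [transpose_add, transpose_smul, transpose_mul, transpose_transpose]
    · have h1 : (lam • (1 : Matrix (Fin d) (Fin d) ℝ) + Vᵀ * V) *ᵥ x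
          = lam • x + Vᵀ *ᵥ (V *ᵥ x) := by
        rw [Matrix.add_mulVec, Matrix.smul_mulVec, Matrix.one_mulVec, Matrix.mulVec_mulVec]
      rw [h1]
      have hxx : 0 < x ⬝ᵥ x := by
        rcases (dotProduct_self_eq_zero (v := x)).not.mpr hx with h
        have : 0 ≤ x ⬝ᵥ x := Finset.sum_nonneg fun i _ => mul_self_nonneg _
        exact lt_of_le_of_ne this (Ne.symm h)
      have h2 : star x ⬝ᵥ (lam • x + Vᵀ *ᵥ (V *ᵥ x))
          = lam * (x ⬝ᵥ x) + (V *ᵥ x) ⬝ᵥ (V *ᵥ x) := by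
        have : x ⬝ᵥ (Vᵀ *ᵥ (V *ᵥ x)) = (V *ᵥ x) ⬝ᵥ (V *ᵥ x) := by
          rw [Matrix.dotProduct_mulVec, Matrix.vecMul_transpose]
        simp only [star_trivial, dotProduct_add, dotProduct_smul, smul_eq_mul, this]
      rw [h2]
      have : 0 ≤ (V *ᵥ x) ⬝ᵥ (V *ᵥ x) := Finset.sum_nonneg fun i _ => mul_self_nonneg _
      nlinarith
  have hdet : 0 < Sig.det := hPD.det_pos
  have hSigT : Sigᵀ = Sig := hPD.isHermitian
  have hUnit : IsUnit Sig.det := isUnit_iff_ne_zero.mpr (ne_of_gt hdet)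
  have hmul : Sig * Sig⁻¹ = 1 := Matrix.mul_nonsing_inv Sig hUnit
  have hInvT : (Sig⁻¹)ᵀ = Sig⁻¹ := by rw [Matrix.transpose_nonsing_inv, hSigT]
  -- square root
  open scoped MatrixOrder in
  set B := CFC.sqrt Sig with hB
  open scoped MatrixOrder in
  have hBsd : B.PosSemidef := (CFC.sqrt_nonneg Sig).posSemidef
  have hBT : Bᵀ = B := hBsd.isHermitian
  open scoped MatrixOrder in
  have hBB : B * B = Sig := CFC.sqrt_mul_sqrt_self Sig hPD.posSemidef.nonneg
  have hdetB2 : B.det * B.det = Sig.det := by rw [← Matrix.det_mul, hBB]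
  have hdetB : B.det ≠ 0 := by
    intro h; rw [h, mul_zero] at hdetB2; exact ne_of_gt hdet hdetB2.symm
  have habsB : |B.det| = Real.sqrt Sig.det := by
    rw [← Real.sqrt_sq_eq_abs, sq, hdetB2]
  -- center
  set a : Fin d → ℝ := Vᵀ *ᵥ w with ha
  set μ : Fin d → ℝ := Sig⁻¹ *ᵥ a with hμ
  have h1 : Sig *ᵥ μ = a := by
    rw [hμ, Matrix.mulVec_mulVec, hmul, Matrix.one_mulVec]
  -- key algebraic identity
  have key : ∀ u : Fin d → ℝ,
      (w - V *ᵥ u) ⬝ᵥ (w - V *ᵥ u) + lam * (u ⬝ᵥ u)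
      = (u - μ) ⬝ᵥ Sig *ᵥ (u - μ) - w ⬝ᵥ (V * Sig⁻¹ * Vᵀ - 1) *ᵥ w := by
    intro u
    have hwVu : w ⬝ᵥ V *ᵥ u = a ⬝ᵥ u := by
      rw [Matrix.dotProduct_mulVec, ha, Matrix.mulVec_transpose]
    have hE1 : (w - V *ᵥ u) ⬝ᵥ (w - V *ᵥ u)
        = w ⬝ᵥ w - 2 * (a ⬝ᵥ u) + u ⬝ᵥ (Vᵀ * V) *ᵥ u := by
      have h2 : (V *ᵥ u) ⬝ᵥ w = a ⬝ᵥ u := by rw [dotProduct_comm, hwVu]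
      have h3 : u ⬝ᵥ (Vᵀ * V) *ᵥ u = (V *ᵥ u) ⬝ᵥ (V *ᵥ u) := by
        rw [← Matrix.mulVec_mulVec, Matrix.dotProduct_mulVec, Matrix.vecMul_transpose]
      rw [sub_dotProduct, dotProduct_sub, dotProduct_sub, hwVu, h2, h3]; ring
    have hE2 : u ⬝ᵥ Sig *ᵥ u = lam * (u ⬝ᵥ u) + u ⬝ᵥ (Vᵀ * V) *ᵥ u := by
      rw [hSig, Matrix.add_mulVec, Matrix.smul_mulVec, Matrix.one_mulVec,
        dotProduct_add, dotProduct_smul, smul_eq_mul]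
    have hμSigu : μ ⬝ᵥ Sig *ᵥ u = a ⬝ᵥ u := by
      rw [Matrix.dotProduct_mulVec]
      rw [show μ ᵥ* Sig = Sigᵀ *ᵥ μ from (Matrix.mulVec_transpose Sig μ).symm, hSigT, h1]
    have huSigμ : u ⬝ᵥ Sig *ᵥ μ = a ⬝ᵥ u := by rw [h1, dotProduct_comm]
    have hμSigμ : μ ⬝ᵥ Sig *ᵥ μ = a ⬝ᵥ μ := by rw [h1, dotProduct_comm]
    have hE3 : (u - μ) ⬝ᵥ Sig *ᵥ (u - μ)
        = u ⬝ᵥ Sig *ᵥ u - 2 * (a ⬝ᵥ u) + a ⬝ᵥ μ := by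
      rw [Matrix.mulVec_sub, sub_dotProduct, dotProduct_sub, dotProduct_sub,
        huSigμ, hμSigu, hμSigμ]; ring
    have hE4 : w ⬝ᵥ (V * Sig⁻¹ * Vᵀ - 1) *ᵥ w = a ⬝ᵥ μ - w ⬝ᵥ w := by
      have h5 : (V * Sig⁻¹ * Vᵀ) *ᵥ w = V *ᵥ μ := by
        rw [hμ, ha, Matrix.mulVec_mulVec, Matrix.mulVec_mulVec]
      have h6 : w ⬝ᵥ V *ᵥ μ = a ⬝ᵥ μ := by
        rw [Matrix.dotProduct_mulVec, ha, Matrix.mulVec_transpose]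
      rw [Matrix.sub_mulVec, dotProduct_sub, h5, h6, Matrix.one_mulVec]
    rw [hE1, hE3, hE4, hE2]; ring
  -- quadratic via B
  have hquad : ∀ x : Fin d → ℝ, (B *ᵥ x) ⬝ᵥ (B *ᵥ x) = x ⬝ᵥ Sig *ᵥ x := by
    intro x
    rw [Matrix.dotProduct_mulVec (B *ᵥ x) B x,
      show (B *ᵥ x) ᵥ* B = Bᵀ *ᵥ (B *ᵥ x) from (Matrix.mulVec_transpose B _).symm, hBT,
      Matrix.mulVec_mulVec, hBB]
    exact dotProduct_comm _ _
  set K : ℝ := (w ⬝ᵥ (V * Sig⁻¹ * Vᵀ - 1) *ᵥ w) / (2 * σ₀ ^ 2) with hK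
  -- pointwise rewrite of the integrand
  have hpt : ∀ u : Fin d → ℝ,
      Real.exp (-((w - V *ᵥ u) ⬝ᵥ (w - V *ᵥ u)) / (2 * σ₀ ^ 2) - (u ⬝ᵥ u) / (2 * σu ^ 2))
      = Real.exp K * Real.exp (-((B *ᵥ (u - μ)) ⬝ᵥ (B *ᵥ (u - μ))) / (2 * σ₀ ^ 2)) := by
    intro u
    rw [← Real.exp_add]
    congr 1
    rw [hquad, hK]
    have := key u
    have hσ₀' : σ₀ ^ 2 ≠ 0 := by positivity
    have hσu' : σu ^ 2 ≠ 0 := by positivity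
    rw [hlam] at this
    field_simp at this ⊢
    nlinarith [this]
  simp_rw [hpt]
  rw [MeasureTheory.integral_const_mul]
  -- translation invariance
  have htrans : (∫ u : Fin d → ℝ,
      Real.exp (-((B *ᵥ (u - μ)) ⬝ᵥ (B *ᵥ (u - μ))) / (2 * σ₀ ^ 2)))
      = ∫ u : Fin d → ℝ, Real.exp (-((B *ᵥ u) ⬝ᵥ (B *ᵥ u)) / (2 * σ₀ ^ 2)) :=
    integral_sub_right_eq_self (fun x => Real.exp (-((B *ᵥ x) ⬝ᵥ (B *ᵥ x)) / (2 * σ₀ ^ 2))) μ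
  rw [htrans]
  -- linear change of variables
  have hcont : Continuous fun v : Fin d → ℝ => Real.exp (-(v ⬝ᵥ v) / (2 * σ₀ ^ 2)) := by
    apply Real.continuous_exp.comp
    apply Continuous.div_const
    apply Continuous.neg
    exact continuous_finset_sum _ fun i _ => (continuous_apply i).mul (continuous_apply i)
  have hmapB : Measure.map (Matrix.toLin' B) volume
      = ENNReal.ofReal |B.det|⁻¹ • volume := by
    simpa [abs_inv] using Real.map_matrix_volume_pi_eq_smul_volume_pi hdetB
  have hchg : (∫ u : Fin d → ℝ, Real.exp (-((B *ᵥ u) ⬝ᵥ (B *ᵥ u)) / (2 * σ₀ ^ 2)))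
      = |B.det|⁻¹ * ∫ v : Fin d → ℝ, Real.exp (-(v ⬝ᵥ v) / (2 * σ₀ ^ 2)) := by
    have hmeas : AEMeasurable (Matrix.toLin' B) (volume : Measure (Fin d → ℝ)) :=
      (LinearMap.continuous_on_pi _).measurable.aemeasurable
    have h7 : (∫ u : Fin d → ℝ, Real.exp (-((B *ᵥ u) ⬝ᵥ (B *ᵥ u)) / (2 * σ₀ ^ 2)))
        = ∫ v, Real.exp (-(v ⬝ᵥ v) / (2 * σ₀ ^ 2)) ∂(Measure.map (Matrix.toLin' B) volume) := by
      rw [MeasureTheory.integral_map hmeas hcont.aestronglyMeasurable]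
      simp [Matrix.toLin'_apply]
    rw [h7, hmapB, MeasureTheory.integral_smul_measure, ENNReal.toReal_ofReal
      (by positivity), smul_eq_mul]
  rw [hchg]
  -- product of one-dimensional Gaussians
  have hone : (∫ x : ℝ, Real.exp (-(x * x) / (2 * σ₀ ^ 2))) = σ₀ * Real.sqrt (2 * π) := by
    have : (fun x : ℝ => Real.exp (-(x * x) / (2 * σ₀ ^ 2)))
        = fun x : ℝ => Real.exp (-(1 / (2 * σ₀ ^ 2)) * x ^ 2) := by
      funext x; congr 1; field_simp
    rw [this, integral_gaussian]
    have h8 : π / (1 / (2 * σ₀ ^ 2)) = σ₀ ^ 2 * (2 * π) := by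
      field_simp
    rw [h8, Real.sqrt_mul (sq_nonneg σ₀), Real.sqrt_sq hσ₀.le]
  have hprod : (∫ v : Fin d → ℝ, Real.exp (-(v ⬝ᵥ v) / (2 * σ₀ ^ 2)))
      = (σ₀ * Real.sqrt (2 * π)) ^ d := by
    have heq : ∀ v : Fin d → ℝ, Real.exp (-(v ⬝ᵥ v) / (2 * σ₀ ^ 2))
        = ∏ i, Real.exp (-(v i * v i) / (2 * σ₀ ^ 2)) := by
      intro v
      rw [← Real.exp_sum]
      congr 1
      rw [dotProduct, ← Finset.sum_div, ← Finset.sum_neg_distrib]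
    simp_rw [heq]
    rw [MeasureTheory.integral_fintype_prod_volume_eq_pow (ι := Fin d)
      (fun x : ℝ => Real.exp (-(x * x) / (2 * σ₀ ^ 2))), hone, Fintype.card_fin]
  rw [hprod, habsB]
  ring
end

section
/- Let the marginal likelihood of a rating vector r given type t be g(t) = ∫_{ℝ^d} exp(−‖r − V u − z_t‖²/(2σ₀²)) · exp(−‖u‖²/(2σ_u²)) du. Then g(+1) = g(−1) · exp( 2 δᵀ M r̄ / σ₀² ); equivalently, the log-likelihood ratio of the two types given the ratings equals 2 δᵀ M r̄ / σ₀². -/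
open Matrix MeasureTheory Real

/-- Likelihood-ratio identity: `g(+1) = g(−1) · exp(2 δᵀ M r̄ / σ₀²)`; equivalently the
log-likelihood ratio of the two types given the ratings equals `2 δᵀ M r̄ / σ₀²`. -/
theorem fbc_likelihood_ratio (d k : ℕ) (hd : 0 < d) (hk : 0 < k)
    (V : Matrix (Fin k) (Fin d) ℝ) (σ₀ σu : ℝ) (hσ₀ : 0 < σ₀) (hσu : 0 < σu)
    (lam : ℝ) (hlam : lam = σ₀ ^ 2 / σu ^ 2)
    (Sig : Matrix (Fin d) (Fin d) ℝ)
    (hSig : Sig = lam • (1 : Matrix (Fin d) (Fin d) ℝ) + Vᵀ * V)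
    (M : Matrix (Fin k) (Fin k) ℝ)
    (hM : M = (1 : Matrix (Fin k) (Fin k) ℝ) - V * Sig⁻¹ * Vᵀ)
    (zp zm r : Fin k → ℝ)
    (δ : Fin k → ℝ) (hδ : δ = (1 / 2 : ℝ) • (zp - zm))
    (rbar : Fin k → ℝ) (hrbar : rbar = r - (1 / 2 : ℝ) • (zp + zm))
    (z : ℤ → Fin k → ℝ) (hz₁ : z 1 = zp) (hz₂ : z (-1) = zm)
    (g : ℤ → ℝ)
    (hg : ∀ t : ℤ, g t =
      ∫ u : Fin d → ℝ,
        Real.exp (-((r - V.mulVec u - z t) ⬝ᵥ (r - V.mulVec u - z t)) / (2 * σ₀ ^ 2)) *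
          Real.exp (-(u ⬝ᵥ u) / (2 * σu ^ 2))) :
    g 1 = g (-1) * Real.exp (2 * (δ ⬝ᵥ M.mulVec rbar) / σ₀ ^ 2) ∧
    Real.log (g 1 / g (-1)) = 2 * (δ ⬝ᵥ M.mulVec rbar) / σ₀ ^ 2 := by
  have hσ₀' : σ₀ ≠ 0 := ne_of_gt hσ₀
  have hσu' : σu ≠ 0 := ne_of_gt hσu
  have hlam0 : 0 < lam := by rw [hlam]; positivity
  -- Sig is positive definite, hence invertible
  have hPD : Sig.PosDef := by
    rw [hSig]
    have h1 : (lam • (1 : Matrix (Fin d) (Fin d) ℝ)).PosDef := by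
      refine Matrix.PosDef.of_dotProduct_mulVec_pos ?_ ?_
      · simp [Matrix.IsHermitian, Matrix.conjTranspose_smul]
      · intro x hx
        simp only [Matrix.smul_mulVec, Matrix.one_mulVec, dotProduct_smul,
          smul_eq_mul]
        have : 0 < star x ⬝ᵥ x := by
          rw [Matrix.dotProduct_star_self_pos_iff]; exact hx
        exact mul_pos hlam0 this
    have h2 : (Vᵀ * V).PosSemidef := by
      have := Matrix.posSemidef_conjTranspose_mul_self V
      simpa using this
    exact h1.add_posSemidef h2
  have hunit : IsUnit Sig.det := hPD.det_pos.ne'.isUnit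
  have hinv' : Sig * Sig⁻¹ = 1 := Matrix.mul_nonsing_inv Sig hunit
  have hSigSym : Sigᵀ = Sig := by
    rw [hSig]; simp [Matrix.transpose_add, Matrix.transpose_smul, Matrix.transpose_mul]
  have hSiginvSym : (Sig⁻¹)ᵀ = Sig⁻¹ := by
    rw [Matrix.transpose_nonsing_inv, hSigSym]
  have hMsym : Mᵀ = M := by
    rw [hM]
    simp [Matrix.transpose_sub, Matrix.transpose_mul, hSiginvSym, Matrix.mul_assoc]
  -- the quadratic form of Sig
  have hq : ∀ w : Fin d → ℝ, w ⬝ᵥ Sig.mulVec w = lam * (w ⬝ᵥ w) + V.mulVec w ⬝ᵥ V.mulVec w := by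
    intro w
    rw [hSig, Matrix.add_mulVec, dotProduct_add, Matrix.smul_mulVec,
      Matrix.one_mulVec, dotProduct_smul, smul_eq_mul, ← Matrix.mulVec_mulVec,
      Matrix.dotProduct_mulVec (v := w) (A := Vᵀ), Matrix.vecMul_transpose]
  -- the completing-the-square identity
  have keyQ : ∀ (a : Fin k → ℝ) (u : Fin d → ℝ),
      (a - V.mulVec (u + (Sig⁻¹ * Vᵀ).mulVec a)) ⬝ᵥ (a - V.mulVec (u + (Sig⁻¹ * Vᵀ).mulVec a))
        + lam * ((u + (Sig⁻¹ * Vᵀ).mulVec a) ⬝ᵥ (u + (Sig⁻¹ * Vᵀ).mulVec a))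
      = u ⬝ᵥ Sig.mulVec u + a ⬝ᵥ M.mulVec a := by
    intro a u
    set m := (Sig⁻¹ * Vᵀ).mulVec a with hm
    set b := Vᵀ.mulVec a with hb
    have hSm : Sig.mulVec m = b := by
      rw [hm, Matrix.mulVec_mulVec, ← Matrix.mul_assoc, hinv', Matrix.one_mul]
    have hgen : ∀ x : Fin d → ℝ, a ⬝ᵥ V.mulVec x = b ⬝ᵥ x := by
      intro x
      rw [Matrix.dotProduct_mulVec, hb, ← Matrix.vecMul_transpose, Matrix.transpose_transpose]
    have hsym : ∀ x y : Fin d → ℝ, x ⬝ᵥ Sig.mulVec y = y ⬝ᵥ Sig.mulVec x := by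
      intro x y
      rw [Matrix.dotProduct_mulVec, ← Matrix.mulVec_transpose, hSigSym, dotProduct_comm]
    have key : lam * ((u + m) ⬝ᵥ (u + m)) =
        (u + m) ⬝ᵥ Sig.mulVec (u + m) - V.mulVec (u + m) ⬝ᵥ V.mulVec (u + m) := by
      rw [hq (u + m)]; ring
    have hMa : a ⬝ᵥ M.mulVec a = a ⬝ᵥ a - b ⬝ᵥ m := by
      rw [hM, Matrix.sub_mulVec, dotProduct_sub, Matrix.one_mulVec,
        Matrix.mul_assoc, ← Matrix.mulVec_mulVec, hgen]
    have e1 := hgen u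
    have e2 := hgen m
    have e3 : u ⬝ᵥ Sig.mulVec m = b ⬝ᵥ u := by rw [hSm, dotProduct_comm]
    have e4 : m ⬝ᵥ Sig.mulVec u = b ⬝ᵥ u := by rw [hsym, e3]
    have e5 : m ⬝ᵥ Sig.mulVec m = b ⬝ᵥ m := by rw [hSm, dotProduct_comm]
    have e6 : V.mulVec u ⬝ᵥ a = b ⬝ᵥ u := by rw [dotProduct_comm, hgen]
    have e7 : V.mulVec m ⬝ᵥ a = b ⬝ᵥ m := by rw [dotProduct_comm, hgen]
    rw [key, hMa]
    simp only [sub_dotProduct, dotProduct_sub, Matrix.mulVec_add,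
      dotProduct_add, add_dotProduct]
    linarith [e1, e2, e3, e4, e5, e6, e7]
  -- the Gaussian normalization constant
  set C : ℝ := ∫ u : Fin d → ℝ, Real.exp (-(u ⬝ᵥ Sig.mulVec u) / (2 * σ₀ ^ 2)) with hC
  have hCpos : 0 < C := by
    have hcont : Continuous fun u : Fin d → ℝ =>
        Real.exp (-(u ⬝ᵥ Sig.mulVec u) / (2 * σ₀ ^ 2)) := by
      apply Real.continuous_exp.comp
      apply Continuous.div_const
      apply Continuous.neg
      have : (fun u : Fin d → ℝ => u ⬝ᵥ Sig.mulVec u)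
          = fun u => ∑ i, u i * ∑ j, Sig i j * u j := by
        ext u; simp [dotProduct, Matrix.mulVec]
      rw [this]; fun_prop
    have hbound : ∀ u : Fin d → ℝ,
        Real.exp (-(u ⬝ᵥ Sig.mulVec u) / (2 * σ₀ ^ 2))
          ≤ ∏ i, Real.exp (-(1/(2*σu^2)) * (u i)^2) := by
      intro u
      rw [← Real.exp_sum]
      apply Real.exp_le_exp.2
      have h1 : (0:ℝ) ≤ V.mulVec u ⬝ᵥ V.mulVec u := by
        have := dotProduct_self_star_nonneg (V.mulVec u)
        simpa using this
      have h2 : u ⬝ᵥ u = ∑ i, (u i)^2 := by simp [dotProduct, pow_two]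
      have h3 : ∑ i, -(1/(2*σu^2)) * (u i)^2 = -(lam * (u ⬝ᵥ u)) / (2*σ₀^2) := by
        rw [h2, hlam, Finset.mul_sum, neg_div, Finset.sum_div, ← Finset.sum_neg_distrib]
        apply Finset.sum_congr rfl
        intro i _
        rw [← neg_div]
        congr 1
        field_simp
      rw [h3, hq u, div_le_div_iff_of_pos_right]
      · nlinarith [h1]
      · positivity
    have hint : Integrable
        (fun u : Fin d → ℝ => Real.exp (-(u ⬝ᵥ Sig.mulVec u) / (2 * σ₀ ^ 2))) := by
      have hgauss : Integrable
          (fun u : Fin d → ℝ => ∏ i, Real.exp (-(1/(2*σu^2)) * (u i)^2)) := by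
        apply Integrable.fintype_prod
          (f := fun (_ : Fin d) (x : ℝ) => Real.exp (-(1/(2*σu^2)) * x^2))
        intro i
        simpa using integrable_exp_neg_mul_sq (by positivity : (0:ℝ) < 1/(2*σu^2))
      apply hgauss.mono (hcont.aestronglyMeasurable)
      filter_upwards with u
      rw [norm_of_nonneg (Real.exp_nonneg _), norm_of_nonneg (by positivity)]
      exact hbound u
    rw [hC, integral_pos_iff_support_of_nonneg_ae]
    · have : Function.support
          (fun u : Fin d → ℝ => Real.exp (-(u ⬝ᵥ Sig.mulVec u) / (2 * σ₀ ^ 2)))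
          = Set.univ := by
        ext u; simp [Function.support, Real.exp_ne_zero]
      rw [this]
      exact IsOpen.measure_pos _ isOpen_univ ⟨0, trivial⟩
    · filter_upwards with u; positivity
    · exact hint
  -- the main Gaussian integral computation
  have main : ∀ a : Fin k → ℝ,
      (∫ u : Fin d → ℝ,
        Real.exp (-((a - V.mulVec u) ⬝ᵥ (a - V.mulVec u)) / (2 * σ₀ ^ 2)) *
          Real.exp (-(u ⬝ᵥ u) / (2 * σu ^ 2)))
      = Real.exp (-(a ⬝ᵥ M.mulVec a) / (2 * σ₀ ^ 2)) * C := by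
    intro a
    have hcomb : ∀ w : Fin d → ℝ,
        Real.exp (-((a - V.mulVec w) ⬝ᵥ (a - V.mulVec w)) / (2 * σ₀ ^ 2)) *
          Real.exp (-(w ⬝ᵥ w) / (2 * σu ^ 2))
        = Real.exp (-(((a - V.mulVec w) ⬝ᵥ (a - V.mulVec w)) + lam * (w ⬝ᵥ w))
            / (2 * σ₀ ^ 2)) := by
      intro w
      rw [← Real.exp_add]
      congr 1
      rw [hlam]
      field_simp
      ring
    simp only [hcomb]
    rw [← MeasureTheory.integral_add_right_eq_self
      (fun w : Fin d → ℝ => Real.exp (-(((a - V.mulVec w) ⬝ᵥ (a - V.mulVec w))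
        + lam * (w ⬝ᵥ w)) / (2 * σ₀ ^ 2))) ((Sig⁻¹ * Vᵀ).mulVec a)]
    have : ∀ u : Fin d → ℝ,
        Real.exp (-(((a - V.mulVec (u + (Sig⁻¹ * Vᵀ).mulVec a)) ⬝ᵥ
            (a - V.mulVec (u + (Sig⁻¹ * Vᵀ).mulVec a)))
          + lam * ((u + (Sig⁻¹ * Vᵀ).mulVec a) ⬝ᵥ (u + (Sig⁻¹ * Vᵀ).mulVec a))) / (2 * σ₀ ^ 2))
        = Real.exp (-(a ⬝ᵥ M.mulVec a) / (2 * σ₀ ^ 2)) *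
            Real.exp (-(u ⬝ᵥ Sig.mulVec u) / (2 * σ₀ ^ 2)) := by
      intro u
      rw [keyQ a u, ← Real.exp_add]
      congr 1
      ring
    simp only [this]
    rw [MeasureTheory.integral_const_mul]
  -- identify the shifted vectors
  have ha1 : r - z 1 = rbar - δ := by
    rw [hz₁, hδ, hrbar]
    ext i
    simp only [Pi.sub_apply, Pi.add_apply, Pi.smul_apply, smul_eq_mul]
    ring
  have ha2 : r - z (-1) = rbar + δ := by
    rw [hz₂, hδ, hrbar]
    ext i
    simp only [Pi.sub_apply, Pi.add_apply, Pi.smul_apply, smul_eq_mul]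
    ring
  have hg1 : g 1 = Real.exp (-((rbar - δ) ⬝ᵥ M.mulVec (rbar - δ)) / (2 * σ₀ ^ 2)) * C := by
    rw [hg 1, ← main (rbar - δ)]
    congr 1
    ext u
    rw [sub_right_comm, ha1]
  have hg2 : g (-1) = Real.exp (-((rbar + δ) ⬝ᵥ M.mulVec (rbar + δ)) / (2 * σ₀ ^ 2)) * C := by
    rw [hg (-1), ← main (rbar + δ)]
    congr 1
    ext u
    rw [sub_right_comm, ha2]
  -- symmetric cross-term identity
  have hcross : rbar ⬝ᵥ M.mulVec δ = δ ⬝ᵥ M.mulVec rbar := by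
    rw [Matrix.dotProduct_mulVec, ← Matrix.mulVec_transpose, hMsym, dotProduct_comm]
  have hdiff : (rbar + δ) ⬝ᵥ M.mulVec (rbar + δ) - (rbar - δ) ⬝ᵥ M.mulVec (rbar - δ)
      = 4 * (δ ⬝ᵥ M.mulVec rbar) := by
    simp only [Matrix.mulVec_add, Matrix.mulVec_sub, dotProduct_add,
      dotProduct_sub, add_dotProduct, sub_dotProduct]
    linarith [hcross]
  have hexp : Real.exp (-((rbar - δ) ⬝ᵥ M.mulVec (rbar - δ)) / (2 * σ₀ ^ 2))
      = Real.exp (-((rbar + δ) ⬝ᵥ M.mulVec (rbar + δ)) / (2 * σ₀ ^ 2)) *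
        Real.exp (2 * (δ ⬝ᵥ M.mulVec rbar) / σ₀ ^ 2) := by
    rw [← Real.exp_add]
    congr 1
    have h4 : (rbar - δ) ⬝ᵥ M.mulVec (rbar - δ)
        = (rbar + δ) ⬝ᵥ M.mulVec (rbar + δ) - 4 * (δ ⬝ᵥ M.mulVec rbar) := by
      linarith [hdiff]
    rw [h4]
    field_simp
    ring
  have hfirst : g 1 = g (-1) * Real.exp (2 * (δ ⬝ᵥ M.mulVec rbar) / σ₀ ^ 2) := by
    rw [hg1, hg2, hexp]
    ring
  refine ⟨hfirst, ?_⟩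
  have hg2pos : 0 < g (-1) := by
    rw [hg2]
    positivity
  rw [hfirst, mul_comm, mul_div_assoc, div_self (ne_of_gt hg2pos), mul_one, Real.log_exp]
end

section
/- Closed form of the expected-risk integral: for all reals α₁ > 0, α₃ > 0, and α₂, α₄, α₅ ∈ ℝ, ∫_{ℝ} exp( −(α₁·r² + α₂·r + |α₃·r + α₄| + α₅)/2 ) dr = α₁^{−1/2} · [ exp( ((α₂−α₃)²/(4α₁) + α₄ − α₅)/2 ) · h( (α₂−α₃)/(2√α₁) − α₄·√α₁/α₃ ) + exp( ((α₂+α₃)²/(4α₁) − α₄ − α₅)/2 ) · h( α₄·√α₁/α₃ − (α₂+α₃)/(2√α₁) ) ], where h(x) = ∫_{−∞}^{x} exp(−s²/2) ds. -/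
open Real MeasureTheory Set

lemma my_integral_comp_mul_add_Iic (g : ℝ → ℝ) (c : ℝ) {a : ℝ} (ha : 0 < a) (b : ℝ) :
    (∫ x in Set.Iic c, g (a * x + b)) = a⁻¹ * ∫ x in Set.Iic (a * c + b), g x := by
  have hemb : MeasurableEmbedding (fun x : ℝ => a * x + b) :=
    (affineHomeomorph a b ha.ne').isClosedEmbedding.measurableEmbedding
  have hmap : Measure.map (fun x : ℝ => a * x + b) volume
      = ENNReal.ofReal a⁻¹ • volume := by
    have : (fun x : ℝ => a * x + b) = (fun x : ℝ => x + b) ∘ (fun x : ℝ => a * x) := rfl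
    rw [this, ← Measure.map_map (measurable_add_const b) (measurable_const_mul a),
      Real.map_volume_mul_left ha.ne', Measure.map_smul, map_add_right_eq_self,
      abs_inv, abs_of_pos ha]
  have key := MeasurableEmbedding.setIntegral_map (μ := volume) hemb g (Set.Iic (a * c + b))
  rw [hmap, Measure.restrict_smul, integral_smul_measure, ENNReal.toReal_ofReal (by positivity)] at key
  have hpre : (fun x : ℝ => a * x + b) ⁻¹' Set.Iic (a * c + b) = Set.Iic c := by
    ext x
    simp only [Set.mem_preimage, Set.mem_Iic]
    constructor
    · intro hx; nlinarith
    · intro hx; nlinarith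
  rw [hpre] at key
  rw [← key, smul_eq_mul]

lemma my_gauss_Iic (c : ℝ) {a : ℝ} (ha : 0 < a) (b : ℝ) :
    (∫ r in Set.Iic c, Real.exp (-(a * r + b) ^ 2 / 2))
      = a⁻¹ * ∫ s in Set.Iic (a * c + b), Real.exp (-s ^ 2 / 2) :=
  my_integral_comp_mul_add_Iic (fun s => Real.exp (-s ^ 2 / 2)) c ha b

lemma my_gauss_Ioi (c : ℝ) {a : ℝ} (ha : 0 < a) (b : ℝ) :
    (∫ r in Set.Ioi c, Real.exp (-(a * r + b) ^ 2 / 2))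
      = a⁻¹ * ∫ s in Set.Iic (-(a * c + b)), Real.exp (-s ^ 2 / 2) := by
  have := integral_comp_neg_Iic (-c) (fun r => Real.exp (-(a * r + b) ^ 2 / 2))
  rw [neg_neg] at this
  rw [← this]
  have : ∀ x ∈ Set.Iic (-c),
      Real.exp (-(a * -x + b) ^ 2 / 2) = Real.exp (-(a * x + -b) ^ 2 / 2) := by
    intro x _; congr 1; ring
  rw [setIntegral_congr_fun measurableSet_Iic this, my_gauss_Iic (-c) ha (-b)]
  have harg : a * -c + -b = -(a * c + b) := by ring
  rw [harg]

lemma my_gauss_integrable {a : ℝ} (ha : 0 < a) (b : ℝ) :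
    MeasureTheory.Integrable (fun r : ℝ => Real.exp (-(a * r + b) ^ 2 / 2)) := by
  have h0 : (0 : ℝ) < a ^ 2 / 2 := by positivity
  have h1 := (integrable_exp_neg_mul_sq h0).comp_add_right (b / a)
  refine h1.congr (Filter.Eventually.of_forall fun x => ?_)
  have : -(a ^ 2 / 2) * (x + b / a) ^ 2 = -(a * x + b) ^ 2 / 2 := by
    field_simp
  show Real.exp (-(a ^ 2 / 2) * (x + b / a) ^ 2) = Real.exp (-(a * x + b) ^ 2 / 2)
  rw [this]

/-- Closed form of the expected-risk integral: for `α₁ > 0`, `α₃ > 0` and reals `α₂, α₄, α₅`,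
`∫_ℝ exp(−(α₁ r² + α₂ r + |α₃ r + α₄| + α₅)/2) dr
  = α₁^{−1/2} [ exp(((α₂−α₃)²/(4α₁) + α₄ − α₅)/2) h((α₂−α₃)/(2√α₁) − α₄√α₁/α₃)
              + exp(((α₂+α₃)²/(4α₁) − α₄ − α₅)/2) h(α₄√α₁/α₃ − (α₂+α₃)/(2√α₁)) ]`,
where `h(x) = ∫_{−∞}^{x} exp(−s²/2) ds`. -/
theorem expected_risk_integral_closed_form
    (h : ℝ → ℝ) (hh : ∀ x : ℝ, h x = ∫ s in Set.Iic x, Real.exp (-s ^ 2 / 2))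
    (α₁ α₂ α₃ α₄ α₅ : ℝ) (h₁ : 0 < α₁) (h₃ : 0 < α₃) :
    (∫ r : ℝ, Real.exp (-(α₁ * r ^ 2 + α₂ * r + |α₃ * r + α₄| + α₅) / 2))
      = (Real.sqrt α₁)⁻¹ *
          (Real.exp (((α₂ - α₃) ^ 2 / (4 * α₁) + α₄ - α₅) / 2) *
              h ((α₂ - α₃) / (2 * Real.sqrt α₁) - α₄ * Real.sqrt α₁ / α₃) +
            Real.exp (((α₂ + α₃) ^ 2 / (4 * α₁) - α₄ - α₅) / 2) *
              h (α₄ * Real.sqrt α₁ / α₃ - (α₂ + α₃) / (2 * Real.sqrt α₁))) := by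
  obtain ⟨s, hs, rfl⟩ : ∃ s : ℝ, 0 < s ∧ s ^ 2 = α₁ :=
    ⟨Real.sqrt α₁, Real.sqrt_pos.mpr h₁, Real.sq_sqrt h₁.le⟩
  rw [Real.sqrt_sq hs.le]
  have hsne : s ≠ 0 := hs.ne'
  set c : ℝ := -α₄ / α₃ with hc
  set d₁ : ℝ := (α₂ - α₃) / (2 * s) with hd₁
  set d₂ : ℝ := (α₂ + α₃) / (2 * s) with hd₂
  set K₁ : ℝ := ((α₂ - α₃) ^ 2 / (4 * s ^ 2) + α₄ - α₅) / 2 with hK₁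
  set K₂ : ℝ := ((α₂ + α₃) ^ 2 / (4 * s ^ 2) - α₄ - α₅) / 2 with hK₂
  have habs₁ : ∀ r ∈ Set.Iic c,
      Real.exp (-(s ^ 2 * r ^ 2 + α₂ * r + |α₃ * r + α₄| + α₅) / 2)
        = Real.exp K₁ * Real.exp (-(s * r + d₁) ^ 2 / 2) := by
    intro r hr
    have hr' : α₃ * r + α₄ ≤ 0 := by
      rw [Set.mem_Iic, hc, le_div_iff₀ h₃] at hr
      nlinarith
    rw [abs_of_nonpos hr', ← Real.exp_add]
    congr 1
    rw [hK₁, hd₁]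
    field_simp
    ring
  have habs₂ : ∀ r ∈ Set.Ioi c,
      Real.exp (-(s ^ 2 * r ^ 2 + α₂ * r + |α₃ * r + α₄| + α₅) / 2)
        = Real.exp K₂ * Real.exp (-(s * r + d₂) ^ 2 / 2) := by
    intro r hr
    have hr' : 0 ≤ α₃ * r + α₄ := by
      rw [Set.mem_Ioi, hc, div_lt_iff₀ h₃] at hr
      nlinarith
    rw [abs_of_nonneg hr', ← Real.exp_add]
    congr 1
    rw [hK₂, hd₂]
    field_simp
    ring
  have hint₁ : IntegrableOn
      (fun r : ℝ => Real.exp (-(s ^ 2 * r ^ 2 + α₂ * r + |α₃ * r + α₄| + α₅) / 2))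
      (Set.Iic c) :=
    (((my_gauss_integrable hs d₁).const_mul (Real.exp K₁)).integrableOn).congr_fun
      (fun r hr => (habs₁ r hr).symm) measurableSet_Iic
  have hint₂ : IntegrableOn
      (fun r : ℝ => Real.exp (-(s ^ 2 * r ^ 2 + α₂ * r + |α₃ * r + α₄| + α₅) / 2))
      (Set.Ioi c) :=
    (((my_gauss_integrable hs d₂).const_mul (Real.exp K₂)).integrableOn).congr_fun
      (fun r hr => (habs₂ r hr).symm) measurableSet_Ioi
  rw [← intervalIntegral.integral_Iic_add_Ioi hint₁ hint₂,
    setIntegral_congr_fun measurableSet_Iic habs₁,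
    setIntegral_congr_fun measurableSet_Ioi habs₂,
    integral_const_mul, integral_const_mul,
    my_gauss_Iic c hs d₁, my_gauss_Ioi c hs d₂]
  have harg₁ : s * c + d₁ = (α₂ - α₃) / (2 * s) - α₄ * s / α₃ := by
    rw [hc, hd₁]; field_simp; ring
  have harg₂ : -(s * c + d₂) = α₄ * s / α₃ - (α₂ + α₃) / (2 * s) := by
    rw [hc, hd₂]; field_simp; ring
  rw [harg₁, harg₂, ← hh, ← hh]
  ring
end

section
/- Decision boundary with non-uniform type priors: let the marginal likelihood of a rating vector r given type t be g(t) = ∫_{ℝ^d} exp(−‖r − V u − z_t‖²/(2σ₀²)) · exp(−‖u‖²/(2σ_u²)) du, and let π₊, π₋ > 0 be prior probabilities of the two types. Then π₊·g(+1) ≥ π₋·g(−1) if and only if 2·δᵀ M r̄ / σ₀² + log(π₊/π₋) ≥ 0; i.e., the maximum a-posteriori type under the priors (π₊, π₋) is +1 exactly when this inequality holds. -/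
open Matrix MeasureTheory Real

lemma fbc_sig_posdef {d k : ℕ} (V : Matrix (Fin k) (Fin d) ℝ) {lam : ℝ} (hlam : 0 < lam) :
    (lam • (1 : Matrix (Fin d) (Fin d) ℝ) + Vᵀ * V).PosDef := by
  apply Matrix.PosDef.add_posSemidef
  · exact Matrix.PosDef.one.smul hlam
  · simpa [Matrix.conjTranspose_eq_transpose_of_trivial] using
      Matrix.posSemidef_conjTranspose_mul_self V

lemma fbc_complete_square {d k : ℕ} (V : Matrix (Fin k) (Fin d) ℝ) {lam : ℝ}
    (Sig : Matrix (Fin d) (Fin d) ℝ)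
    (hSig : Sig = lam • (1 : Matrix (Fin d) (Fin d) ℝ) + Vᵀ * V)
    (hSigsymm : Sigᵀ = Sig) (hinv : Sig * Sig⁻¹ = 1)
    (M : Matrix (Fin k) (Fin k) ℝ)
    (hM : M = (1 : Matrix (Fin k) (Fin k) ℝ) - V * Sig⁻¹ * Vᵀ)
    (w : Fin k → ℝ) (u : Fin d → ℝ) :
    (w - V *ᵥ u) ⬝ᵥ (w - V *ᵥ u) + lam * (u ⬝ᵥ u) =
      ((u - Sig⁻¹ *ᵥ (Vᵀ *ᵥ w)) ⬝ᵥ Sig *ᵥ (u - Sig⁻¹ *ᵥ (Vᵀ *ᵥ w))) + w ⬝ᵥ M *ᵥ w := by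
  set μ := Sig⁻¹ *ᵥ (Vᵀ *ᵥ w) with hμ
  have e1 : ∀ (x : Fin d → ℝ) (y : Fin k → ℝ), x ⬝ᵥ (Vᵀ *ᵥ y) = (V *ᵥ x) ⬝ᵥ y := by
    intro x y
    rw [Matrix.dotProduct_mulVec, Matrix.vecMul_transpose]
  have esymm : ∀ x y : Fin d → ℝ, x ⬝ᵥ Sig *ᵥ y = y ⬝ᵥ Sig *ᵥ x := by
    intro x y
    rw [Matrix.dotProduct_mulVec, ← Matrix.mulVec_transpose, hSigsymm, dotProduct_comm]
  have hSigμ : Sig *ᵥ μ = Vᵀ *ᵥ w := by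
    rw [hμ, Matrix.mulVec_mulVec, hinv, Matrix.one_mulVec]
  have ha : ∀ x : Fin d → ℝ, x ⬝ᵥ Sig *ᵥ x = lam * (x ⬝ᵥ x) + (V *ᵥ x) ⬝ᵥ (V *ᵥ x) := by
    intro x
    rw [hSig, Matrix.add_mulVec, dotProduct_add, Matrix.smul_mulVec,
      Matrix.one_mulVec, dotProduct_smul, smul_eq_mul, ← Matrix.mulVec_mulVec, e1]
  have hMw : M *ᵥ w = w - V *ᵥ μ := by
    rw [hM, Matrix.sub_mulVec, Matrix.one_mulVec, hμ, ← Matrix.mulVec_mulVec,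
      ← Matrix.mulVec_mulVec]
  have lhs : (w - V *ᵥ u) ⬝ᵥ (w - V *ᵥ u) + lam * (u ⬝ᵥ u) =
      w ⬝ᵥ w - 2 * (u ⬝ᵥ (Vᵀ *ᵥ w)) + u ⬝ᵥ Sig *ᵥ u := by
    rw [sub_dotProduct, dotProduct_sub, dotProduct_sub, ha,
      e1 u w, dotProduct_comm w (V *ᵥ u)]
    ring
  have rhs1 : (u - μ) ⬝ᵥ Sig *ᵥ (u - μ) =
      u ⬝ᵥ Sig *ᵥ u - 2 * (u ⬝ᵥ (Vᵀ *ᵥ w)) + μ ⬝ᵥ (Vᵀ *ᵥ w) := by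
    rw [sub_dotProduct, Matrix.mulVec_sub, dotProduct_sub, dotProduct_sub,
      esymm μ u, hSigμ]
    ring
  have rhs2 : w ⬝ᵥ M *ᵥ w = w ⬝ᵥ w - μ ⬝ᵥ (Vᵀ *ᵥ w) := by
    rw [hMw, dotProduct_sub, e1 μ w, dotProduct_comm w (V *ᵥ μ)]
  rw [lhs, rhs1, rhs2]; ring

lemma fbc_integrable {d : ℕ} (Sig : Matrix (Fin d) (Fin d) ℝ) {lam σ₀ : ℝ}
    (hlam : 0 < lam) (hσ₀ : 0 < σ₀)
    (hbound : ∀ x : Fin d → ℝ, lam * (x ⬝ᵥ x) ≤ x ⬝ᵥ Sig *ᵥ x) :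
    Integrable (fun v : Fin d → ℝ => Real.exp (-(v ⬝ᵥ Sig *ᵥ v) / (2 * σ₀ ^ 2))) := by
  have h2s : (0:ℝ) < 2 * σ₀ ^ 2 := by positivity
  have hc : (0:ℝ) < lam / (2 * σ₀ ^ 2) := by positivity
  have hbInt : Integrable (fun v : Fin d → ℝ => ∏ i, Real.exp (-(lam / (2 * σ₀ ^ 2)) * v i ^ 2)) :=
    Integrable.fintype_prod (f := fun _ (x : ℝ) => Real.exp (-(lam / (2 * σ₀ ^ 2)) * x ^ 2))
      (fun _ => integrable_exp_neg_mul_sq hc)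
  have hcont : Continuous fun v : Fin d → ℝ => Real.exp (-(v ⬝ᵥ Sig *ᵥ v) / (2 * σ₀ ^ 2)) := by
    have h1 : Continuous fun v : Fin d → ℝ => v ⬝ᵥ Sig *ᵥ v := by
      simp only [dotProduct, Matrix.mulVec]
      exact continuous_finset_sum _ fun i _ =>
        (continuous_apply i).mul
          (continuous_finset_sum _ fun j _ => continuous_const.mul (continuous_apply j))
    exact Real.continuous_exp.comp (h1.neg.div_const _)
  refine hbInt.mono' hcont.aestronglyMeasurable (ae_of_all _ fun v => ?_)
  rw [Real.norm_eq_abs, abs_of_pos (Real.exp_pos _)]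
  have : Real.exp (-(lam * (v ⬝ᵥ v)) / (2 * σ₀ ^ 2)) =
      ∏ i, Real.exp (-(lam / (2 * σ₀ ^ 2)) * v i ^ 2) := by
    rw [← Real.exp_sum]
    congr 1
    rw [dotProduct]
    rw [Finset.mul_sum, neg_eq_neg_one_mul, Finset.mul_sum, Finset.sum_div]
    congr 1
    ext i
    ring
  rw [← this]
  apply Real.exp_le_exp.mpr
  exact div_le_div_of_nonneg_right (neg_le_neg (hbound v)) h2s.le

/-- Decision boundary with non-uniform type priors `π₊, π₋ > 0`:
`π₊ g(+1) ≥ π₋ g(−1)` iff `2 δᵀ M r̄ / σ₀² + log(π₊/π₋) ≥ 0`, i.e. the MAP type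
under the priors is `+1` exactly when this inequality holds. -/
theorem fbc_nonuniform_prior_boundary (d k : ℕ) (hd : 0 < d) (hk : 0 < k)
    (V : Matrix (Fin k) (Fin d) ℝ) (σ₀ σu : ℝ) (hσ₀ : 0 < σ₀) (hσu : 0 < σu)
    (lam : ℝ) (hlam : lam = σ₀ ^ 2 / σu ^ 2)
    (Sig : Matrix (Fin d) (Fin d) ℝ)
    (hSig : Sig = lam • (1 : Matrix (Fin d) (Fin d) ℝ) + Vᵀ * V)
    (M : Matrix (Fin k) (Fin k) ℝ)
    (hM : M = (1 : Matrix (Fin k) (Fin k) ℝ) - V * Sig⁻¹ * Vᵀ)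
    (zp zm r : Fin k → ℝ)
    (δ : Fin k → ℝ) (hδ : δ = (1 / 2 : ℝ) • (zp - zm))
    (rbar : Fin k → ℝ) (hrbar : rbar = r - (1 / 2 : ℝ) • (zp + zm))
    (z : ℤ → Fin k → ℝ) (hz₁ : z 1 = zp) (hz₂ : z (-1) = zm)
    (g : ℤ → ℝ)
    (hg : ∀ t : ℤ, g t =
      ∫ u : Fin d → ℝ,
        Real.exp (-((r - V.mulVec u - z t) ⬝ᵥ (r - V.mulVec u - z t)) / (2 * σ₀ ^ 2)) *
          Real.exp (-(u ⬝ᵥ u) / (2 * σu ^ 2)))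
    (πp πm : ℝ) (hπp : 0 < πp) (hπm : 0 < πm) :
    πp * g 1 ≥ πm * g (-1) ↔
      2 * (δ ⬝ᵥ M.mulVec rbar) / σ₀ ^ 2 + Real.log (πp / πm) ≥ 0 := by
  have hσ₀2 : (0:ℝ) < 2 * σ₀ ^ 2 := by positivity
  have hlam0 : 0 < lam := by rw [hlam]; positivity
  have hpd : Sig.PosDef := by rw [hSig]; exact fbc_sig_posdef V hlam0
  have hunit : IsUnit Sig.det := (Matrix.isUnit_iff_isUnit_det _).mp hpd.isUnit
  have hinv : Sig * Sig⁻¹ = 1 := Matrix.mul_nonsing_inv _ hunit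
  have hSigsymm : Sigᵀ = Sig := by
    rw [hSig]
    simp [Matrix.transpose_add, Matrix.transpose_smul, Matrix.transpose_one, Matrix.transpose_mul]
  have hinvsymm : Sig⁻¹ᵀ = Sig⁻¹ := by
    rw [Matrix.transpose_nonsing_inv, hSigsymm]
  have hMsymm : Mᵀ = M := by
    rw [hM]
    simp [Matrix.transpose_sub, Matrix.transpose_mul, Matrix.transpose_one, hinvsymm,
      Matrix.mul_assoc]
  have hbound : ∀ x : Fin d → ℝ, lam * (x ⬝ᵥ x) ≤ x ⬝ᵥ Sig *ᵥ x := by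
    intro x
    rw [hSig, Matrix.add_mulVec, dotProduct_add, Matrix.smul_mulVec,
      Matrix.one_mulVec, dotProduct_smul, smul_eq_mul]
    have h2 : 0 ≤ x ⬝ᵥ (Vᵀ * V) *ᵥ x := by
      rw [← Matrix.mulVec_mulVec, Matrix.dotProduct_mulVec, Matrix.vecMul_transpose]
      exact Finset.sum_nonneg fun i _ => mul_self_nonneg _
    linarith
  set f : (Fin d → ℝ) → ℝ := fun v => Real.exp (-(v ⬝ᵥ Sig *ᵥ v) / (2 * σ₀ ^ 2)) with hf
  have hint : Integrable f := fbc_integrable Sig hlam0 hσ₀ hbound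
  set I := ∫ v : Fin d → ℝ, f v with hI
  have hIpos : 0 < I := by
    rw [hI, integral_pos_iff_support_of_nonneg (fun u => (Real.exp_pos _).le) hint]
    have hsupp : Function.support f = Set.univ := by
      ext u; simp [hf, Real.exp_ne_zero]
    rw [hsupp]
    exact isOpen_univ.measure_pos _ ⟨0, trivial⟩
  have key : ∀ t : ℤ, g t = Real.exp (-((r - z t) ⬝ᵥ M *ᵥ (r - z t)) / (2 * σ₀ ^ 2)) * I := by
    intro t
    set w := r - z t with hw
    set μ := Sig⁻¹ *ᵥ (Vᵀ *ᵥ w) with hμ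
    have hcongr : ∀ u : Fin d → ℝ,
        Real.exp (-((r - V *ᵥ u - z t) ⬝ᵥ (r - V *ᵥ u - z t)) / (2 * σ₀ ^ 2)) *
          Real.exp (-(u ⬝ᵥ u) / (2 * σu ^ 2)) =
        Real.exp (-(w ⬝ᵥ M *ᵥ w) / (2 * σ₀ ^ 2)) * f (u - μ) := by
      intro u
      have harg : r - V *ᵥ u - z t = w - V *ᵥ u := by rw [hw, sub_right_comm]
      rw [harg, ← Real.exp_add, hf, ← Real.exp_add]
      congr 1
      have hq : -(u ⬝ᵥ u) / (2 * σu ^ 2) = -(lam * (u ⬝ᵥ u)) / (2 * σ₀ ^ 2) := by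
        rw [hlam]
        field_simp
      have hcs := fbc_complete_square V Sig hSig hSigsymm hinv M hM w u
      rw [hq, ← add_div, ← add_div]
      congr 1
      rw [← hμ] at hcs
      linarith
    calc g t = ∫ u : Fin d → ℝ,
          Real.exp (-(w ⬝ᵥ M *ᵥ w) / (2 * σ₀ ^ 2)) * f (u - μ) := by
          rw [hg t]; exact integral_congr_ae (ae_of_all _ hcongr)
      _ = Real.exp (-(w ⬝ᵥ M *ᵥ w) / (2 * σ₀ ^ 2)) * ∫ u : Fin d → ℝ, f (u - μ) :=
          integral_const_mul _ _
      _ = Real.exp (-(w ⬝ᵥ M *ᵥ w) / (2 * σ₀ ^ 2)) * I := by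
          rw [integral_sub_right_eq_self f μ]
  have hw1 : r - z 1 = rbar - δ := by
    rw [hz₁, hrbar, hδ]
    ext i
    simp only [Pi.sub_apply, Pi.add_apply, Pi.smul_apply, smul_eq_mul]
    ring
  have hwm : r - z (-1) = rbar + δ := by
    rw [hz₂, hrbar, hδ]
    ext i
    simp only [Pi.sub_apply, Pi.add_apply, Pi.smul_apply, smul_eq_mul]
    ring
  have hsym : rbar ⬝ᵥ M *ᵥ δ = δ ⬝ᵥ M *ᵥ rbar := by
    rw [Matrix.dotProduct_mulVec, ← Matrix.mulVec_transpose, hMsymm, dotProduct_comm]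
  have quad : ((rbar + δ) ⬝ᵥ M *ᵥ (rbar + δ)) - ((rbar - δ) ⬝ᵥ M *ᵥ (rbar - δ)) =
      4 * (δ ⬝ᵥ M *ᵥ rbar) := by
    rw [add_dotProduct, sub_dotProduct, Matrix.mulVec_add, Matrix.mulVec_sub,
      dotProduct_add, dotProduct_add, dotProduct_sub,
      dotProduct_sub, hsym]
    ring
  rw [key 1, key (-1), hw1, hwm]
  have hA1 : 0 < πp * Real.exp (-((rbar - δ) ⬝ᵥ M *ᵥ (rbar - δ)) / (2 * σ₀ ^ 2)) := by positivity
  have hAm : 0 < πm * Real.exp (-((rbar + δ) ⬝ᵥ M *ᵥ (rbar + δ)) / (2 * σ₀ ^ 2)) := by positivity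
  rw [ge_iff_le, ← mul_assoc, ← mul_assoc, mul_le_mul_iff_of_pos_right hIpos,
    ← Real.log_le_log_iff hAm hA1, Real.log_mul hπm.ne' (Real.exp_pos _).ne',
    Real.log_mul hπp.ne' (Real.exp_pos _).ne', Real.log_exp, Real.log_exp,
    ge_iff_le, Real.log_div hπp.ne' hπm.ne']
  have e : 2 * (δ ⬝ᵥ M *ᵥ rbar) / σ₀ ^ 2 =
      ((rbar + δ) ⬝ᵥ M *ᵥ (rbar + δ)) / (2 * σ₀ ^ 2) -
        ((rbar - δ) ⬝ᵥ M *ᵥ (rbar - δ)) / (2 * σ₀ ^ 2) := by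
    rw [div_sub_div_same, show ((rbar + δ) ⬝ᵥ M *ᵥ (rbar + δ)) -
      ((rbar - δ) ⬝ᵥ M *ᵥ (rbar - δ)) = 4 * (δ ⬝ᵥ M *ᵥ rbar) from quad]
    field_simp
    ring
  simp only [neg_div]
  rw [e]
  constructor <;> intro h <;> linarith
end
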